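/- Let C ⊆ ℝ^q be a polyhedral cone with nonempty interior containing no lines, and let c ∈ int C with c_q = 1. Let P ∈ ℝ^{q×d}, B ∈ ℝ^{m×d}, b ∈ ℝ^m, S = {x ∈ ℝ^d : Bx ≥ b} (assumed nonempty), and let 𝒫 = P[S] + C be the upper image of the vector optimization problem of minimizing Px over S with respect to ≤_C. Let Z(x) = sup{xᵀz : z ∈ −𝒫} be the support function of −𝒫, and let 𝒟* = D*[T] − K be the lower image of the geometric dual problem, where T = {(u,w) ∈ ℝ^m × ℝ^q : u ≥ 0, Bᵀu = Pᵀw, cᵀw = 1, w ∈ C⁺}, D*(u,w) = (w_1,…,w_{q−1}, bᵀu)ᵀ, and K = cone{e^q}. Then 𝒟* = {w ∈ ℝ^q : −w_q ≥ Z(w_1,…,w_{q−1}, 1 − Σ_{i=1}^{q−1} c_i w_i)}. -/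

import Mathlib

open Matrix Pointwise

/-- Support function of a set `A ⊆ ℝⁿ`, with values in the extended reals. -/
noncomputable def suppF {n : ℕ} (A : Set (Fin n → ℝ)) (x : Fin n → ℝ) : EReal :=
  sSup ((fun z => ((x ⬝ᵥ z : ℝ) : EReal)) '' A)


section ConeAux

variable {E : Type*} [AddCommGroup E] [Module ℝ E]

/-- The convex cone generated by a finite family of vectors. -/
def coneOf {ι : Type*} [Fintype ι] (v : ι → E) : Set E :=
  {x | ∃ l : ι → ℝ, (∀ i, 0 ≤ l i) ∧ x = ∑ i, l i • v i}

lemma cara_aux {ι : Type*} [Fintype ι] [DecidableEq ι] (v : ι → E) :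
    ∀ (n : ℕ) (s : Finset ι), s.card ≤ n → ∀ l : ι → ℝ, (∀ i ∈ s, 0 ≤ l i) →
    ∃ t : Finset ι, LinearIndependent ℝ (fun i : t => v i) ∧
      (∑ i ∈ s, l i • v i) ∈ coneOf (fun i : t => v i) := by
  intro n
  induction n with
  | zero =>
    intro s hs l _
    have hse : s = ∅ := Finset.card_eq_zero.mp (Nat.le_zero.mp hs)
    subst hse
    refine ⟨∅, ?_, 0, fun i => le_refl 0, by simp⟩
    haveI : IsEmpty ((∅ : Finset ι) : Type _) := ⟨fun x => Finset.notMem_empty _ x.2⟩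
    exact linearIndependent_empty_type
  | succ n ih =>
    intro s hs l hl
    by_cases hli : LinearIndependent ℝ (fun i : s => v i)
    · exact ⟨s, hli, ⟨fun i => l i, fun i => hl i i.2,
        (Finset.sum_coe_sort s (fun i => l i • v i)).symm⟩⟩
    · rw [Fintype.not_linearIndependent_iff] at hli
      obtain ⟨g, hg0, j, hgj⟩ := hli
      obtain ⟨μ, hsum0, i₁, hi₁s, hi₁pos⟩ :
          ∃ μ : ι → ℝ, ∑ i ∈ s, μ i • v i = 0 ∧ ∃ i ∈ s, 0 < μ i := by
        set μ0 : ι → ℝ := fun i => if h : i ∈ s then g ⟨i, h⟩ else 0 with hμ0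
        have hsum : ∑ i ∈ s, μ0 i • v i = 0 := by
          rw [← Finset.sum_coe_sort s (fun i => μ0 i • v i)]
          rw [show (∑ i : s, μ0 (i : ι) • v (i : ι)) = ∑ i : s, g i • v i from
            Finset.sum_congr rfl fun i _ => by simp [hμ0, dif_pos i.2]]
          exact hg0
        have hμ0j : μ0 (j : ι) = g j := by simp [hμ0, dif_pos j.2]
        rcases hgj.lt_or_gt with hneg | hpos
        · refine ⟨-μ0, ?_, j, j.2, by simp [hμ0j]; linarith⟩
          simp only [Pi.neg_apply, neg_smul, Finset.sum_neg_distrib, hsum, neg_zero]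
        · exact ⟨μ0, hsum, j, j.2, by rw [hμ0j]; exact hpos⟩
      set F := s.filter (fun i => 0 < μ i) with hF
      have hFne : F.Nonempty := ⟨i₁, Finset.mem_filter.mpr ⟨hi₁s, hi₁pos⟩⟩
      obtain ⟨i0, hi0F, hi0min⟩ := F.exists_min_image (fun i => l i / μ i) hFne
      have hi0s : i0 ∈ s := (Finset.mem_filter.mp hi0F).1
      have hμi0 : 0 < μ i0 := (Finset.mem_filter.mp hi0F).2
      set t0 : ℝ := l i0 / μ i0 with ht0def
      have ht0 : 0 ≤ t0 := div_nonneg (hl i0 hi0s) hμi0.le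
      set l' : ι → ℝ := fun i => l i - t0 * μ i with hl'
      have hl'nn : ∀ i ∈ s, 0 ≤ l' i := by
        intro i his
        by_cases hpos : 0 < μ i
        · have hmin := hi0min i (Finset.mem_filter.mpr ⟨his, hpos⟩)
          have : t0 * μ i ≤ l i := by
            rw [← le_div_iff₀ hpos]; exact hmin
          simp only [hl']; linarith
        · push_neg at hpos
          have := hl i his
          simp only [hl']; nlinarith
      have hl'i0 : l' i0 = 0 := by
        simp only [hl', ht0def]
        field_simp
        ring
      have hsum' : ∑ i ∈ s, l' i • v i = ∑ i ∈ s, l i • v i := by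
        simp only [hl', sub_smul, Finset.sum_sub_distrib]
        rw [show ∑ i ∈ s, (t0 * μ i) • v i = t0 • ∑ i ∈ s, μ i • v i by
          rw [Finset.smul_sum]; exact Finset.sum_congr rfl fun i _ => (mul_smul _ _ _)]
        rw [hsum0, smul_zero, sub_zero]
      have herase : ∑ i ∈ s.erase i0, l' i • v i = ∑ i ∈ s, l' i • v i :=
        Finset.sum_erase s (by rw [hl'i0, zero_smul])
      have hcard : (s.erase i0).card ≤ n := by
        have := Finset.card_erase_of_mem hi0s
        omega
      obtain ⟨t, hti, htm⟩ := ih (s.erase i0) hcard l'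
        (fun i hi => hl'nn i (Finset.mem_of_mem_erase hi))
      refine ⟨t, hti, ?_⟩
      rwa [herase, hsum'] at htm

lemma cara {ι : Type*} [Fintype ι] [DecidableEq ι] (v : ι → E) {x : E}
    (hx : x ∈ coneOf v) :
    ∃ t : Finset ι, LinearIndependent ℝ (fun i : t => v i) ∧
      x ∈ coneOf (fun i : t => v i) := by
  obtain ⟨l, hl, rfl⟩ := hx
  exact cara_aux v Finset.univ.card Finset.univ le_rfl l (fun i _ => hl i)

end ConeAux

section Closed


variable {E : Type*} [NormedAddCommGroup E] [NormedSpace ℝ E] [FiniteDimensional ℝ E]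
variable {ι : Type*} [Fintype ι]

lemma isClosed_coneOf_li (v : ι → E) (hv : LinearIndependent ℝ v) :
    IsClosed (coneOf v) := by
  classical
  set f : (ι → ℝ) →ₗ[ℝ] E := Fintype.linearCombination ℝ v with hf
  have hker : LinearMap.ker f = ⊥ := by
    rw [LinearMap.ker_eq_bot']
    intro g hg
    have hz : ∑ i, g i • v i = 0 := by
      rwa [hf, Fintype.linearCombination_apply] at hg
    funext i
    exact Fintype.linearIndependent_iff.mp hv g hz i
  have hemb := LinearMap.isClosedEmbedding_of_injective hker
  have hset : coneOf v = f '' {l : ι → ℝ | ∀ i, 0 ≤ l i} := by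
    ext x
    constructor
    · rintro ⟨l, hl, rfl⟩
      exact ⟨l, hl, by rw [hf, Fintype.linearCombination_apply]⟩
    · rintro ⟨l, hl, rfl⟩
      exact ⟨l, hl, by rw [hf, Fintype.linearCombination_apply]⟩
  rw [hset]
  apply hemb.isClosedMap
  have : {l : ι → ℝ | ∀ i, 0 ≤ l i} = ⋂ i, {l : ι → ℝ | 0 ≤ l i} := by ext; simp
  rw [this]
  exact isClosed_iInter fun i => isClosed_le continuous_const (continuous_apply i)

lemma isClosed_coneOf (v : ι → E) : IsClosed (coneOf v) := by
  classical
  have hunion : coneOf v = ⋃ t : Finset ι,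
      (if LinearIndependent ℝ (fun i : t => v i) then coneOf (fun i : t => v i) else ∅) := by
    ext x
    simp only [Set.mem_iUnion]
    constructor
    · intro hx
      obtain ⟨t, hli, hm⟩ := cara v hx
      exact ⟨t, by rw [if_pos hli]; exact hm⟩
    · rintro ⟨t, hx⟩
      by_cases hli : LinearIndependent ℝ (fun i : t => v i)
      · rw [if_pos hli] at hx
        obtain ⟨l, hl, rfl⟩ := hx
        refine ⟨fun i => if h : i ∈ t then l ⟨i, h⟩ else 0, fun i => ?_, ?_⟩
        · by_cases h : i ∈ t <;> simp [h, hl]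
        · rw [← Finset.sum_subset t.subset_univ (fun i _ hit => by simp [dif_neg hit])]
          rw [← Finset.sum_coe_sort t
            (fun i => (if h : i ∈ t then l ⟨i, h⟩ else 0) • v i)]
          exact Finset.sum_congr rfl fun i _ => by simp [dif_pos i.2]
      · rw [if_neg hli] at hx
        exact absurd hx (Set.notMem_empty x)
  rw [hunion]
  refine isClosed_iUnion_of_finite fun t => ?_
  split
  · exact isClosed_coneOf_li _ ‹_›
  · exact isClosed_empty

end Closed

section Sep

open scoped RealInnerProductSpace

lemma sep {n k : ℕ} (v : Fin k → (Fin n → ℝ)) (x : Fin n → ℝ)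
    (hx : x ∉ coneOf v) :
    ∃ y : Fin n → ℝ, (∀ j, 0 ≤ v j ⬝ᵥ y) ∧ x ⬝ᵥ y < 0 := by
  classical
  set H := EuclideanSpace ℝ (Fin n)
  set e : (Fin n → ℝ) ≃L[ℝ] H := (EuclideanSpace.equiv (Fin n) ℝ).symm with he
  set v' : Fin k → H := fun j => e (v j) with hv'
  set K : ConvexCone ℝ H :=
    { carrier := coneOf v'
      smul_mem' := by
        rintro c hc _ ⟨l, hl, rfl⟩
        refine ⟨fun i => c * l i, fun i => mul_nonneg hc.le (hl i), ?_⟩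
        rw [Finset.smul_sum]
        exact Finset.sum_congr rfl fun i _ => smul_smul c (l i) (v' i)
      add_mem' := by
        rintro _ ⟨l1, h1, rfl⟩ _ ⟨l2, h2, rfl⟩
        refine ⟨l1 + l2, fun i => add_nonneg (h1 i) (h2 i), ?_⟩
        rw [← Finset.sum_add_distrib]
        exact Finset.sum_congr rfl fun i _ => (add_smul _ _ _).symm } with hK
  have hne : (K : Set H).Nonempty :=
    ⟨0, ⟨0, fun i => le_refl 0, by simp⟩⟩
  have hcl : IsClosed (K : Set H) := isClosed_coneOf v'
  have hxK : e x ∉ K := by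
    rintro ⟨l, hl, hxe⟩
    refine hx ⟨l, hl, ?_⟩
    apply e.injective
    rw [hxe, map_sum]
    exact Finset.sum_congr rfl fun i _ => by simp only [_root_.map_smul]; rfl
  obtain ⟨y, hy1, hy2⟩ : ∃ y : H, (∀ x ∈ K, 0 ≤ ⟪x, y⟫) ∧ ⟪y, e x⟫ < 0 := by
    obtain ⟨y, h1, h2⟩ := ProperCone.hyperplane_separation'
      (⟨K.toPointedCone (show (0 : H) ∈ coneOf v' from ⟨0, fun i => le_refl 0, by simp⟩),
        hcl⟩ : ProperCone ℝ H) (by exact hxK)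
    exact ⟨y, h1, by rwa [real_inner_comm]⟩
  refine ⟨fun i => y i, fun j => ?_, ?_⟩
  · have hmem : v' j ∈ K := by
      refine ⟨fun i => if i = j then 1 else 0, fun i => by positivity, ?_⟩
      simp [ite_smul]
    have h0 := hy1 (v' j) hmem
    have hinner : ⟪v' j, y⟫ = v j ⬝ᵥ (fun i => y i) := by
      rw [PiLp.inner_apply]
      simp only [RCLike.inner_apply, conj_trivial]
      exact Finset.sum_congr rfl fun i _ => mul_comm _ _
    rwa [hinner] at h0
  · have hinner : ⟪y, e x⟫ = x ⬝ᵥ (fun i => y i) := by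
      rw [PiLp.inner_apply]
      simp only [RCLike.inner_apply, conj_trivial]
      exact Finset.sum_congr rfl fun i _ => rfl
    rwa [hinner] at hy2

end Sep

section Farkas

lemma farkas {m d : ℕ} (B : Matrix (Fin m) (Fin d) ℝ) (b : Fin m → ℝ)
    (a : Fin d → ℝ) (γ : ℝ)
    (hfeas : ∃ x, ∀ i, b i ≤ (B *ᵥ x) i)
    (h : ∀ x, (∀ i, b i ≤ (B *ᵥ x) i) → γ ≤ a ⬝ᵥ x) :
    ∃ u : Fin m → ℝ, (∀ j, 0 ≤ u j) ∧ Bᵀ *ᵥ u = a ∧ γ ≤ b ⬝ᵥ u := by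
  classical
  set v : Fin (m + 1) → (Fin (d + 1) → ℝ) :=
    Fin.snoc (fun j => Fin.snoc (fun i => B j i) (b j))
      (Fin.snoc (0 : Fin d → ℝ) (-1)) with hv
  have hxK : (Fin.snoc a γ : Fin (d + 1) → ℝ) ∈ coneOf v := by
    by_contra hnot
    obtain ⟨y, hy1, hy2⟩ := sep v _ hnot
    set x : Fin d → ℝ := fun i => y i.castSucc with hxdef
    set t : ℝ := y (Fin.last d) with htdef
    have ht : t ≤ 0 := by
      have h0 := hy1 (Fin.last m)
      rw [hv] at h0
      simp only [Fin.snoc_last, dotProduct, Fin.sum_univ_castSucc, Fin.snoc_castSucc,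
        Pi.zero_apply, zero_mul, Finset.sum_const_zero, zero_add, neg_mul, one_mul] at h0
      linarith
    have hrow : ∀ j : Fin m, 0 ≤ (B *ᵥ x) j + b j * t := by
      intro j
      have h0 := hy1 j.castSucc
      rw [hv] at h0
      simp only [Fin.snoc_castSucc, dotProduct, Fin.sum_univ_castSucc, Fin.snoc_last] at h0
      simpa [mulVec, dotProduct, hxdef, htdef] using h0
    have hlast : a ⬝ᵥ x + γ * t < 0 := by
      have h0 := hy2
      simp only [dotProduct, Fin.sum_univ_castSucc, Fin.snoc_castSucc, Fin.snoc_last] at h0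
      simpa [dotProduct, hxdef, htdef] using h0
    rcases ht.lt_or_eq with htneg | ht0
    · have hpos : 0 < -t := by linarith
      set x' : Fin d → ℝ := (-t)⁻¹ • x with hx'
      have hfeas' : ∀ i, b i ≤ (B *ᵥ x') i := by
        intro i
        have h1 := hrow i
        have hmul : (B *ᵥ x') i = (-t)⁻¹ * (B *ᵥ x) i := by
          rw [hx', Matrix.mulVec_smul]
          simp
        rw [hmul]
        rw [le_inv_mul_iff₀ hpos]
        nlinarith
      have h2 := h x' hfeas'
      have hax : a ⬝ᵥ x' = (-t)⁻¹ * (a ⬝ᵥ x) := by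
        rw [hx', dotProduct_smul]
        simp
      rw [hax] at h2
      have h3 : -t * γ ≤ a ⬝ᵥ x := (le_inv_mul_iff₀ hpos).mp h2
      nlinarith
    · obtain ⟨x0, hx0⟩ := hfeas
      have hBx : ∀ j, 0 ≤ (B *ᵥ x) j := by
        intro j; have h5 := hrow j; rw [ht0] at h5; simpa using h5
      have hax : a ⬝ᵥ x < 0 := by
        have h5 := hlast; rw [ht0] at h5; simpa using h5
      have hx0γ : γ ≤ a ⬝ᵥ x0 := h x0 hx0
      set s : ℝ := (a ⬝ᵥ x0 - γ) / (-(a ⬝ᵥ x)) + 1 with hs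
      have hspos : 0 ≤ s := by
        have h5 : 0 ≤ (a ⬝ᵥ x0 - γ) / (-(a ⬝ᵥ x)) :=
          div_nonneg (by linarith) (by linarith)
        rw [hs]; linarith
      have hfeas2 : ∀ i, b i ≤ (B *ᵥ (x0 + s • x)) i := by
        intro i
        rw [Matrix.mulVec_add, Matrix.mulVec_smul]
        have h1 := hBx i
        have h2 := hx0 i
        simp only [Pi.add_apply, Pi.smul_apply, smul_eq_mul]
        nlinarith
      have h4 := h _ hfeas2
      rw [dotProduct_add, dotProduct_smul] at h4
      have hne : a ⬝ᵥ x ≠ 0 := ne_of_lt hax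
      have hsx : s * (a ⬝ᵥ x) = -(a ⬝ᵥ x0 - γ) + (a ⬝ᵥ x) := by
        have hcancel : (a ⬝ᵥ x0 - γ) / -(a ⬝ᵥ x) * -(a ⬝ᵥ x) = a ⬝ᵥ x0 - γ :=
          div_mul_cancel₀ _ (neg_ne_zero.mpr hne)
        rw [hs]
        nlinarith [hcancel]
      simp only [smul_eq_mul] at h4
      rw [hsx] at h4
      linarith
  obtain ⟨lam, hlam, heq⟩ := hxK
  refine ⟨fun j => lam j.castSucc, fun j => hlam _, ?_, ?_⟩
  · funext i
    have h0 := congrFun heq i.castSucc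
    rw [hv] at h0
    simp only [Finset.sum_apply, Pi.smul_apply, smul_eq_mul, Fin.sum_univ_castSucc,
      Fin.snoc_castSucc, Fin.snoc_last, Pi.zero_apply, mul_zero, add_zero] at h0
    simp only [mulVec, dotProduct, transpose_apply]
    rw [h0]
    exact Finset.sum_congr rfl fun j _ => mul_comm _ _
  · have h0 := congrFun heq (Fin.last d)
    rw [hv] at h0
    simp only [Finset.sum_apply, Pi.smul_apply, smul_eq_mul, Fin.sum_univ_castSucc,
      Fin.snoc_castSucc, Fin.snoc_last] at h0
    have hnn : 0 ≤ lam (Fin.last m) := hlam _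
    have : b ⬝ᵥ (fun j => lam j.castSucc) = ∑ j : Fin m, lam j.castSucc * b j := by
      simp [dotProduct, mul_comm]
    rw [this]
    rw [h0]
    nlinarith
end Farkas

lemma suppF_neg_le_iff {n : ℕ} (A : Set (Fin n → ℝ)) (x : Fin n → ℝ) (r : ℝ) :
    suppF (-A) x ≤ (r : EReal) ↔ ∀ y ∈ A, -r ≤ x ⬝ᵥ y := by
  rw [suppF, sSup_le_iff]
  constructor
  · intro h y hy
    have h0 := h _ ⟨-y, Set.neg_mem_neg.mpr hy, rfl⟩
    rw [EReal.coe_le_coe_iff, dotProduct_neg] at h0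
    linarith
  · rintro h _ ⟨z, hz, rfl⟩
    rw [EReal.coe_le_coe_iff]
    have h0 := h (-z) (Set.mem_neg.mp hz)
    rw [dotProduct_neg] at h0
    linarith

/-- the lower image of the geometric dual problem equals
`{w : −w_q ≥ Z(w_1,…,w_{q−1}, 1 − Σ c_i w_i)}`, where `Z` is the support
function of `−Pimg` and `Pimg = P[S] + C` is the upper image of the primal problem.
Here the dimension of the value space is `q + 1` (so the paper's `q` is `q+1`). -/
theorem stmt0 (q d m : ℕ)
    (C : Set (Fin (q + 1) → ℝ))
    (hCpoly : ∃ (k : ℕ) (v : Fin k → (Fin (q + 1) → ℝ)),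
      C = {x | ∃ lam : Fin k → ℝ, (∀ i, 0 ≤ lam i) ∧ x = ∑ i, lam i • v i})
    (hCint : (interior C).Nonempty)
    (hClines : C ∩ (-C) = {0})
    (c : Fin (q + 1) → ℝ) (hc : c ∈ interior C) (hcq : c (Fin.last q) = 1)
    (P : Matrix (Fin (q + 1)) (Fin d) ℝ) (B : Matrix (Fin m) (Fin d) ℝ) (b : Fin m → ℝ)
    (S : Set (Fin d → ℝ)) (hS : S = {x | ∀ i, b i ≤ (B *ᵥ x) i}) (hSne : S.Nonempty)
    (Pimg : Set (Fin (q + 1) → ℝ)) (hPimg : Pimg = (fun x => P *ᵥ x) '' S + C)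
    (Z : (Fin (q + 1) → ℝ) → EReal) (hZ : Z = suppF (-Pimg))
    (T : Set ((Fin m → ℝ) × (Fin (q + 1) → ℝ)))
    (hT : T = {p | (∀ j, 0 ≤ p.1 j) ∧ Bᵀ *ᵥ p.1 = Pᵀ *ᵥ p.2 ∧ c ⬝ᵥ p.2 = 1 ∧
      ∀ y ∈ C, 0 ≤ p.2 ⬝ᵥ y})
    (Dstar : Set (Fin (q + 1) → ℝ))
    (hD : Dstar = {v | ∃ p ∈ T, ∃ lam : ℝ, 0 ≤ lam ∧
      v = (Fin.snoc (fun i : Fin q => p.2 i.castSucc) (b ⬝ᵥ p.1) : Fin (q + 1) → ℝ)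
          - lam • (Pi.single (Fin.last q) 1 : Fin (q + 1) → ℝ)}) :
    Dstar = {w | Z (Fin.snoc (fun i : Fin q => w i.castSucc)
        (1 - ∑ i : Fin q, c i.castSucc * w i.castSucc) : Fin (q + 1) → ℝ)
      ≤ ((-(w (Fin.last q)) : ℝ) : EReal)} := by
  classical
  obtain ⟨k, vg, hCv⟩ := hCpoly
  have hC0 : (0 : Fin (q + 1) → ℝ) ∈ C := by
    rw [hCv]; exact ⟨0, fun i => le_refl 0, by simp⟩
  have hCsmul : ∀ y ∈ C, ∀ t : ℝ, 0 ≤ t → t • y ∈ C := by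
    intro y hy t ht
    rw [hCv] at hy ⊢
    obtain ⟨l, hl, rfl⟩ := hy
    refine ⟨fun i => t * l i, fun i => mul_nonneg ht (hl i), ?_⟩
    rw [Finset.smul_sum]
    exact Finset.sum_congr rfl fun i _ => smul_smul t (l i) (vg i)
  subst hS hPimg hZ hT hD
  ext w
  simp only [Set.mem_setOf_eq]
  set what : Fin (q + 1) → ℝ :=
    Fin.snoc (fun i : Fin q => w i.castSucc)
      (1 - ∑ i : Fin q, c i.castSucc * w i.castSucc) with hwhat
  rw [suppF_neg_le_iff, neg_neg]
  constructor
  · -- Dstar ⊆ RHS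
    rintro ⟨⟨u, w'⟩, ⟨hu, hBu, hcw', hwC⟩, lam, hlam, hw⟩
    have hwc : ∀ i : Fin q, w i.castSucc = w' i.castSucc := by
      intro i
      rw [hw]
      simp [Fin.snoc_castSucc, Pi.single_apply, (Fin.castSucc_lt_last i).ne]
    have hwlast : w (Fin.last q) = b ⬝ᵥ u - lam := by
      rw [hw]
      simp [Fin.snoc_last, Pi.single_apply]
    have hweq : what = w' := by
      funext i
      refine Fin.lastCases ?_ ?_ i
      · have hdot : c ⬝ᵥ w' =
            ∑ i : Fin q, c i.castSucc * w' i.castSucc + w' (Fin.last q) := by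
          rw [dotProduct, Fin.sum_univ_castSucc, hcq, one_mul]
        have hsum : ∑ i : Fin q, c i.castSucc * w i.castSucc
            = ∑ i : Fin q, c i.castSucc * w' i.castSucc :=
          Finset.sum_congr rfl fun i _ => by rw [hwc i]
        have : what (Fin.last q)
            = 1 - ∑ i : Fin q, c i.castSucc * w i.castSucc := by
          rw [hwhat, Fin.snoc_last]
        rw [this, hsum]
        rw [hdot] at hcw'
        linarith
      · intro i
        rw [hwhat]
        rw [Fin.snoc_castSucc]
        exact hwc i
    intro y hy
    rw [Set.mem_add] at hy
    obtain ⟨a1, ha1, z, hz, rfl⟩ := hy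
    obtain ⟨xx, hxx, rfl⟩ := ha1
    have hxx' : ∀ i, b i ≤ (B *ᵥ xx) i := hxx
    have h1 : what ⬝ᵥ (P *ᵥ xx) = u ⬝ᵥ (B *ᵥ xx) := by
      rw [hweq, Matrix.dotProduct_mulVec, ← Matrix.mulVec_transpose, ← hBu,
        Matrix.mulVec_transpose, ← Matrix.dotProduct_mulVec]
    have hub : b ⬝ᵥ u ≤ u ⬝ᵥ (B *ᵥ xx) := by
      rw [dotProduct_comm]
      exact Finset.sum_le_sum fun j _ => mul_le_mul_of_nonneg_left (hxx' j) (hu j)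
    have hz0 : 0 ≤ what ⬝ᵥ z := by rw [hweq]; exact hwC z hz
    rw [dotProduct_add, h1, hwlast]
    linarith
  · -- RHS ⊆ Dstar
    intro hA
    obtain ⟨x0, hx0⟩ := hSne
    have hx0' : ∀ i, b i ≤ (B *ᵥ x0) i := hx0
    have hPx : ∀ x, (∀ i, b i ≤ (B *ᵥ x) i) →
        w (Fin.last q) ≤ what ⬝ᵥ (P *ᵥ x) := by
      intro x hx
      have hmem : P *ᵥ x ∈ (fun x => P *ᵥ x) '' {x | ∀ i, b i ≤ (B *ᵥ x) i} + C := by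
        have := Set.add_mem_add (Set.mem_image_of_mem (fun x => P *ᵥ x)
          (show x ∈ {x' | ∀ i, b i ≤ (B *ᵥ x') i} from hx)) hC0
        rwa [add_zero] at this
      exact hA _ hmem
    have hCpos : ∀ y ∈ C, 0 ≤ what ⬝ᵥ y := by
      intro y hy
      by_contra hneg
      push_neg at hneg
      set a0 : ℝ := what ⬝ᵥ (P *ᵥ x0) with ha0
      have ha : w (Fin.last q) ≤ a0 := hPx x0 hx0'
      set tt : ℝ := (a0 - w (Fin.last q) + 1) / (-(what ⬝ᵥ y)) with htt
      have httpos : 0 ≤ tt := by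
        rw [htt]
        exact div_nonneg (by linarith) (by linarith)
      have hmem : P *ᵥ x0 + tt • y ∈
          (fun x => P *ᵥ x) '' {x | ∀ i, b i ≤ (B *ᵥ x) i} + C :=
        Set.add_mem_add (Set.mem_image_of_mem (fun x => P *ᵥ x) hx0')
          (hCsmul y hy tt httpos)
      have h2 := hA _ hmem
      rw [dotProduct_add, dotProduct_smul, smul_eq_mul] at h2
      have hcancel : tt * (what ⬝ᵥ y) = -(a0 - w (Fin.last q) + 1) := by
        rw [htt]
        have hne : -(what ⬝ᵥ y) ≠ 0 := by linarith
        have hne2 : what ⬝ᵥ y ≠ 0 := ne_of_lt hneg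
        field_simp
      rw [← ha0] at h2
      rw [hcancel] at h2
      linarith
    have hchat : c ⬝ᵥ what = 1 := by
      have h1 : c ⬝ᵥ what = ∑ i : Fin q, c i.castSucc * what i.castSucc
          + c (Fin.last q) * what (Fin.last q) := by
        rw [dotProduct, Fin.sum_univ_castSucc]
      have h2 : ∀ i : Fin q, what i.castSucc = w i.castSucc := fun i => by
        rw [hwhat, Fin.snoc_castSucc]
      have h3 : what (Fin.last q) = 1 - ∑ i : Fin q, c i.castSucc * w i.castSucc := by
        rw [hwhat, Fin.snoc_last]
      rw [h1, h3, hcq, one_mul]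
      rw [Finset.sum_congr rfl fun i _ => by rw [h2 i]]
      ring
    have hfar := farkas B b (Pᵀ *ᵥ what) (w (Fin.last q)) ⟨x0, hx0'⟩
      (fun x hx => by
        have := hPx x hx
        rwa [Matrix.dotProduct_mulVec, ← Matrix.mulVec_transpose] at this)
    obtain ⟨u, hu, hBu, hbu⟩ := hfar
    refine ⟨(u, what), ⟨hu, hBu, hchat, hCpos⟩, b ⬝ᵥ u - w (Fin.last q),
      by linarith, ?_⟩
    funext i
    refine Fin.lastCases ?_ ?_ i
    · simp only [Pi.sub_apply, Fin.snoc_last, Pi.smul_apply, Pi.single_eq_same,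
        smul_eq_mul, mul_one]
      ring
    · intro i
      simp only [Pi.sub_apply, Fin.snoc_castSucc, Pi.smul_apply, smul_eq_mul]
      rw [Pi.single_eq_of_ne (Fin.castSucc_lt_last i).ne, mul_zero, sub_zero]
      rw [hwhat, Fin.snoc_castSucc]
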